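/- Already over a 5-element set the graph is not 3-colorable: letting V = {p : Fin 5 × Fin 5 // p.1 ≠ p.2} with edge relation E((a,b),(c,d)) ⟺ (a = d ∧ b ≠ c) ∨ (a ≠ d ∧ b = c), there is no function f : V → Fin 3 such that f(x) ≠ f(y) whenever E(x,y) holds. -/

import Mathlib

open Finset

lemma digraph_bound (E : Fin 5 → Fin 5 → Bool)
    (hE : ∀ a b c, E a b → E b c → a = c) :
    (Finset.univ.filter (fun p : Fin 5 × Fin 5 => E p.1 p.2)).card ≤ 6 := by
  classical
  set U : Finset (Fin 5) := Finset.univ.filter (fun v => ∃ w, E v w) with hU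
  set W : Finset (Fin 5) := Finset.univ.filter (fun v => ∃ u, E u v) with hW
  set P := U ∩ W with hP
  set S := U \ W with hS
  set T := W \ U with hT
  set Ef := Finset.univ.filter (fun p : Fin 5 × Fin 5 => E p.1 p.2) with hEf
  -- every edge target is in W
  have hsplit : Ef = Ef.filter (fun p => p.2 ∈ P) ∪ Ef.filter (fun p => p.2 ∈ T) := by
    ext p
    simp only [Finset.mem_union, Finset.mem_filter, hEf, Finset.mem_univ, true_and]
    constructor
    · intro h
      have hpW : p.2 ∈ W := by
        simp [hW]; exact ⟨p.1, h⟩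
      by_cases hpU : p.2 ∈ U
      · exact Or.inl ⟨h, by simp [hP, hpU, hpW]⟩
      · exact Or.inr ⟨h, by simp [hT, hpU, hpW]⟩
    · rintro (⟨h, _⟩ | ⟨h, _⟩) <;> exact h
  have card1 : (Ef.filter (fun p => p.2 ∈ P)).card ≤ P.card := by
    apply Finset.card_le_card_of_injOn (fun p => p.2)
    · intro p hp
      simp only [Finset.mem_coe, Finset.mem_filter] at hp
      exact hp.2
    · intro p hp q hq hpq
      simp only [Finset.mem_coe, Finset.mem_filter, hEf, Finset.mem_univ, true_and] at hp hq
      -- p.2 = q.2 ∈ P, so it has an out-edge w; both p.1 and q.1 equal w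
      obtain ⟨hpE, hpP⟩ := hp
      obtain ⟨hqE, hqP⟩ := hq
      have : p.2 ∈ U := by rw [hP] at hpP; exact (Finset.mem_inter.mp hpP).1
      simp only [hU, Finset.mem_filter, Finset.mem_univ, true_and] at this
      obtain ⟨w, hw⟩ := this
      have hpq' : p.2 = q.2 := hpq
      have h1 : p.1 = w := hE p.1 p.2 w hpE hw
      have h2 : q.1 = w := hE q.1 q.2 w hqE (hpq' ▸ hw)
      exact Prod.ext (h1.trans h2.symm) hpq' 
  have card2 : (Ef.filter (fun p => p.2 ∈ T)).card ≤ S.card * T.card := by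
    have hsub : Ef.filter (fun p => p.2 ∈ T) ⊆ S ×ˢ T := by
      intro p hp
      simp only [Finset.mem_filter, hEf, Finset.mem_univ, true_and] at hp
      obtain ⟨hpE, hpT⟩ := hp
      rw [Finset.mem_product]
      refine ⟨?_, hpT⟩
      -- p.1 ∈ S : p.1 ∈ U clearly; if p.1 ∈ W then ∃ x, E x p.1, then x = p.2, so E p.2 p.1, so p.2 ∈ U, contra
      have hpU : p.1 ∈ U := by
        simp only [hU, Finset.mem_filter, Finset.mem_univ, true_and]
        exact ⟨p.2, hpE⟩
      rw [hS, Finset.mem_sdiff]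
      refine ⟨hpU, ?_⟩
      intro hpW
      simp only [hW, Finset.mem_filter, Finset.mem_univ, true_and] at hpW
      obtain ⟨x, hx⟩ := hpW
      have : x = p.2 := hE x p.1 p.2 hx hpE
      subst this
      have : p.2 ∈ U := by
        simp only [hU, Finset.mem_filter, Finset.mem_univ, true_and]
        exact ⟨p.1, hx⟩
      rw [hT, Finset.mem_sdiff] at hpT
      exact hpT.2 this
    calc (Ef.filter (fun p => p.2 ∈ T)).card ≤ (S ×ˢ T).card := Finset.card_le_card hsub
      _ = S.card * T.card := Finset.card_product S T
  have hcards : P.card + S.card + T.card ≤ 5 := by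
    have hPS : P.card + S.card = U.card := by
      rw [hP, hS]; exact Finset.card_inter_add_card_sdiff U W
    have hd : Disjoint U T := by rw [hT]; exact Finset.disjoint_sdiff
    have hUT : U.card + T.card ≤ 5 := by
      calc U.card + T.card = (U ∪ T).card := (Finset.card_union_of_disjoint hd).symm
        _ ≤ (Finset.univ : Finset (Fin 5)).card := Finset.card_le_univ _
        _ = 5 := by simp
    omega
  have htotal : Ef.card ≤ P.card + S.card * T.card := by
    have hle := Finset.card_union_le (Ef.filter (fun p => p.2 ∈ P)) (Ef.filter (fun p => p.2 ∈ T))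
    rw [← hsplit] at hle
    exact le_trans hle (Nat.add_le_add card1 card2)
  have harith : ∀ p s t : ℕ, p + s + t ≤ 5 → p + s * t ≤ 6 := by
    intro p s t h
    have hp : p ≤ 5 := by omega
    have hs : s ≤ 5 := by omega
    have ht : t ≤ 5 := by omega
    interval_cases p <;> interval_cases s <;> interval_cases t <;> omega
  exact le_trans htotal (harith _ _ _ hcards)

theorem stmt_1 :
    ¬ ∃ f : {p : Fin 5 × Fin 5 // p.1 ≠ p.2} → Fin 3,
      ∀ x y : {p : Fin 5 × Fin 5 // p.1 ≠ p.2},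
        ((x.1.1 = y.1.2 ∧ x.1.2 ≠ y.1.1) ∨ (x.1.1 ≠ y.1.2 ∧ x.1.2 = y.1.1)) →
        f x ≠ f y := by
  rintro ⟨f, hf⟩
  set g : Fin 5 → Fin 5 → Fin 3 := fun a b => if h : a ≠ b then f ⟨(a, b), h⟩ else 0 with hg
  have hg' : ∀ a b c : Fin 5, a ≠ b → b ≠ c → a ≠ c → g a b ≠ g b c := by
    intro a b c hab hbc hac
    simp only [hg, dif_pos hab, dif_pos hbc]
    exact hf ⟨(a, b), hab⟩ ⟨(b, c), hbc⟩ (Or.inr ⟨hac, rfl⟩)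
  set s : Finset (Fin 5 × Fin 5) := Finset.univ.filter (fun p => p.1 ≠ p.2) with hs
  have hcard_s : s.card = 20 := by decide
  have hfib := Finset.card_eq_sum_card_fiberwise
    (f := fun p : Fin 5 × Fin 5 => g p.1 p.2) (s := s) (t := Finset.univ)
    (fun x _ => Finset.mem_univ _)
  have key : ∀ i : Fin 3, (s.filter (fun p => g p.1 p.2 = i)).card ≤ 6 := by
    intro i
    have hE : ∀ a b c : Fin 5, (decide (a ≠ b) && decide (g a b = i)) = true →
        (decide (b ≠ c) && decide (g b c = i)) = true → a = c := by
      intro a b c h1 h2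
      simp only [Bool.and_eq_true, decide_eq_true_eq] at h1 h2
      by_contra hac
      exact hg' a b c h1.1 h2.1 hac (h1.2.trans h2.2.symm)
    have hb := digraph_bound (fun a b => decide (a ≠ b) && decide (g a b = i)) hE
    have heq : s.filter (fun p => g p.1 p.2 = i) =
        Finset.univ.filter (fun p : Fin 5 × Fin 5 =>
          (decide (p.1 ≠ p.2) && decide (g p.1 p.2 = i)) = true) := by
      ext p
      simp [hs, Finset.mem_filter, and_assoc]
    rw [heq]
    exact hb
  have h18 : s.card ≤ 18 := by
    rw [hfib]
    calc (∑ i : Fin 3, (s.filter (fun p => g p.1 p.2 = i)).card)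
        ≤ ∑ _i : Fin 3, 6 := Finset.sum_le_sum (fun i _ => key i)
      _ = 18 := by simp
  omega
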